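/- Assume hypotheses (H1)–(H3) for a smooth Hamiltonian H on the slow–fast phase space M = ℝ^{2r} × ℝ^{2k}, with momentum map J satisfying ⟨d₁J⟩ = 0. If m ∈ M is a point where ⟨d₁H⟩_m ≠ 0 and (d₀H)_m ≠ 0, then the differentials dH_m and dJ_m are linearly independent elements of (ℝ^{2r+2k})^*. -/

import Mathlib

open Real MeasureTheory Asymptotics Set

noncomputable section

/-- Fast factor `ℝ^{2r}` with variables `(y, x)`. -/
abbrev Fast (r : ℕ) := (Fin r → ℝ) × (Fin r → ℝ)

/-- Slow factor `ℝ^{2k}` with variables `(p, q)`. -/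
abbrev Slow (k : ℕ) := (Fin k → ℝ) × (Fin k → ℝ)

/-- The slow-fast phase space `M = ℝ^{2r} × ℝ^{2k}`. -/
abbrev SF (r k : ℕ) := Fast r × Slow k

/-- The fast Hamiltonian vector field `X_H^{(0)}`: `ẏ = -∂H/∂x`, `ẋ = ∂H/∂y`,
zero slow components. -/
def fastVF {r k : ℕ} (H : SF r k → ℝ) (m : SF r k) : SF r k :=
  ((fun i => -(fderiv ℝ H m ((0, Pi.single i 1), 0)),
    fun i => fderiv ℝ H m ((Pi.single i 1, 0), 0)), 0)

/-- The slow Hamiltonian vector field `X_H^{(1)}`: `ṗ = -∂H/∂q`, `q̇ = ∂H/∂p`,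
zero fast components. -/
def slowVF {r k : ℕ} (H : SF r k → ℝ) (m : SF r k) : SF r k :=
  (0, (fun j => -(fderiv ℝ H m (0, (0, Pi.single j 1))),
       fun j => fderiv ℝ H m (0, (Pi.single j 1, 0))))

/-- The differential of `f` in the slow variables only, `d₁f`, as a 1-form. -/
def d1Form {r k : ℕ} (f : SF r k → ℝ) (m w : SF r k) : ℝ :=
  fderiv ℝ f m ((0 : Fast r), w.2)

/-- Average `⟨α⟩` of a 1-form `α` along a `2π`-periodic flow `φ`:
`⟨α⟩_m(w) = (1/2π)∫₀^{2π} α_{φ(t,m)}(D_mφ(t,·) w) dt`. -/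
def avg1 {r k : ℕ} (φ : ℝ → SF r k → SF r k) (α : SF r k → SF r k → ℝ)
    (m w : SF r k) : ℝ :=
  (1 / (2 * π)) * ∫ t in (0:ℝ)..(2 * π), α (φ t m) (fderiv ℝ (φ t) m w)

/-- Integrating operator `S(α)` on a 1-form `α` along a `2π`-periodic flow `φ`. -/
def intOp1 {r k : ℕ} (φ : ℝ → SF r k → SF r k) (α : SF r k → SF r k → ℝ)
    (m w : SF r k) : ℝ :=
  (1 / (2 * π)) * ∫ t in (0:ℝ)..(2 * π), (t - π) * α (φ t m) (fderiv ℝ (φ t) m w)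

lemma expand_fast {r k : ℕ} (L : SF r k →L[ℝ] ℝ) (a b : Fin r → ℝ) :
    L ((a, b), 0) = ∑ i, a i * L ((Pi.single i 1, 0), 0)
      + ∑ i, b i * L ((0, Pi.single i 1), 0) := by
  have h : ((a, b), (0 : Slow k)) =
      (∑ i, a i • ((((Pi.single i 1 : Fin r → ℝ), 0), (0 : Slow k)) : SF r k))
      + ∑ i, b i • ((((0 : Fin r → ℝ), Pi.single i 1), (0 : Slow k)) : SF r k) := by
    ext x <;>
      simp [Prod.fst_sum, Prod.snd_sum, Prod.smul_fst, Prod.smul_snd,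
        Finset.sum_apply, Pi.single_apply, mul_ite, Finset.sum_ite_eq]
  rw [h, map_add, map_sum, map_sum]
  simp_rw [_root_.map_smul, smul_eq_mul]

lemma fderiv_fastVF {r k : ℕ} (H : SF r k → ℝ) (n : SF r k) :
    fderiv ℝ H n (fastVF H n) = 0 := by
  show fderiv ℝ H n ((_, _), 0) = 0
  rw [expand_fast, ← Finset.sum_add_distrib]
  exact Finset.sum_eq_zero fun i _ => by ring

section Inv
variable {r k : ℕ} (H : SF r k → ℝ)
    (ω : SF r k → ℝ)
    (φ : ℝ → SF r k → SF r k)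
    (hφ_smooth : ContDiff ℝ (⊤ : ℕ∞) (fun p : ℝ × SF r k => φ p.1 p.2))
    (hφ0 : ∀ m, φ 0 m = m)
    (hφ' : ∀ t m, HasDerivAt (fun s => φ s m) ((ω (φ t m))⁻¹ • fastVF H (φ t m)) t)

include hφ_smooth in
lemma phi_diff : ∀ t, Differentiable ℝ (φ t) := by
  intro t
  have : Differentiable ℝ (fun x : SF r k => (fun p : ℝ × SF r k => φ p.1 p.2) (t, x)) :=
    (hφ_smooth.differentiable (by simp)).comp
      (Differentiable.prodMk (differentiable_const t) differentiable_id)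
  exact this

include hφ0 hφ' in
lemma flow_inv (f : SF r k → ℝ) (hf : Differentiable ℝ f)
    (hf0 : ∀ n, fderiv ℝ f n (fastVF H n) = 0) :
    ∀ t x, f (φ t x) = f x := by
  intro t x
  have hd : ∀ s, HasDerivAt (fun s => f (φ s x)) 0 s := by
    intro s
    have h1 := (hf (φ s x)).hasFDerivAt.comp_hasDerivAt s (hφ' s x)
    have h2 : fderiv ℝ f (φ s x) ((ω (φ s x))⁻¹ • fastVF H (φ s x)) = 0 := by
      rw [_root_.map_smul, hf0]; simp
    simpa [Function.comp_def, h2] using h1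
  have := is_const_of_deriv_eq_zero (fun s => (hd s).differentiableAt)
    (fun s => (hd s).deriv) t 0
  rwa [hφ0] at this

include hφ0 hφ' in
lemma flow_slow_inv : ∀ t x, (φ t x).2 = x.2 := by
  intro t x
  have hd : ∀ s, HasDerivAt (fun s => (φ s x).2) 0 s := by
    intro s
    have h1 := (ContinuousLinearMap.snd ℝ (Fast r) (Slow k)).hasFDerivAt.comp_hasDerivAt
      s (hφ' s x)
    simpa [fastVF, Function.comp_def] using h1
  have := is_const_of_deriv_eq_zero (fun s => (hd s).differentiableAt)
    (fun s => (hd s).deriv) t 0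
  rw [hφ0] at this
  exact this

end Inv

/-- Under hypotheses (H1)-(H3), at any point `m` where `⟨d₁H⟩_m ≠ 0`
and `(d₀H)_m ≠ 0`, the differentials `dH_m` and `dJ_m` are linearly independent. -/
theorem stmt7 {r k : ℕ} (H : SF r k → ℝ) (hH : ContDiff ℝ (⊤ : ℕ∞) H)
    (ω : SF r k → ℝ) (hω_smooth : ContDiff ℝ (⊤ : ℕ∞) ω) (hω_pos : ∀ m, 0 < ω m)
    (φ : ℝ → SF r k → SF r k)
    (hφ_smooth : ContDiff ℝ (⊤ : ℕ∞) (fun p : ℝ × SF r k => φ p.1 p.2))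
    (hφ0 : ∀ m, φ 0 m = m)
    (hφ' : ∀ t m, HasDerivAt (fun s => φ s m) ((ω (φ t m))⁻¹ • fastVF H (φ t m)) t)
    (hper : ∀ t m, φ (t + 2 * π) m = φ t m)
    (J : SF r k → ℝ) (hJ_smooth : ContDiff ℝ (⊤ : ℕ∞) J)
    (hH2 : ∀ m (u : Fast r),
      fderiv ℝ J m (u, (0 : Slow k)) = (1 / ω m) * fderiv ℝ H m (u, 0))
    (hH3 : ∀ m w, avg1 φ (d1Form J) m w = 0)
    (m : SF r k)
    (h1 : ∃ w, avg1 φ (d1Form H) m w ≠ 0)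
    (h0 : ∃ u : Fast r, fderiv ℝ H m (u, (0 : Slow k)) ≠ 0) :
    ∀ a b : ℝ, (∀ v : SF r k, a * fderiv ℝ H m v + b * fderiv ℝ J m v = 0) →
      a = 0 ∧ b = 0 := by
  intro a b hab
  have hHd : Differentiable ℝ H := hH.differentiable (by simp)
  have hJd : Differentiable ℝ J := hJ_smooth.differentiable (by simp)
  have hφd : ∀ t, Differentiable ℝ (φ t) := phi_diff φ hφ_smooth
  have hJ0 : ∀ n, fderiv ℝ J n (fastVF H n) = 0 := by
    intro n
    have h1 : fastVF H n = ((fastVF H n).1, (0 : Slow k)) := rfl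
    calc fderiv ℝ J n (fastVF H n) = fderiv ℝ J n ((fastVF H n).1, (0 : Slow k)) := by
          rw [← h1]
      _ = (1 / ω n) * fderiv ℝ H n ((fastVF H n).1, 0) := hH2 n _
      _ = (1 / ω n) * fderiv ℝ H n (fastVF H n) := by rw [← h1]
      _ = 0 := by rw [fderiv_fastVF]; ring
  have hHinv := flow_inv H ω φ hφ0 hφ' H hHd (fderiv_fastVF H)
  have hJinv := flow_inv H ω φ hφ0 hφ' J hJd hJ0
  have hslow := flow_slow_inv H ω φ hφ0 hφ'
  have hDφ2 : ∀ t (w : SF r k), (fderiv ℝ (φ t) m w).2 = w.2 := by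
    intro t w
    have e1 : HasFDerivAt (fun x : SF r k => (φ t x).2)
        ((ContinuousLinearMap.snd ℝ (Fast r) (Slow k)).comp (fderiv ℝ (φ t) m)) m :=
      (ContinuousLinearMap.snd ℝ (Fast r) (Slow k)).hasFDerivAt.comp m
        ((hφd t m).hasFDerivAt)
    have e2 : HasFDerivAt (fun x : SF r k => (φ t x).2)
        (ContinuousLinearMap.snd ℝ (Fast r) (Slow k)) m := by
      have : (fun x : SF r k => (φ t x).2) = Prod.snd := funext fun x => hslow t x
      rw [this]
      exact (ContinuousLinearMap.snd ℝ (Fast r) (Slow k)).hasFDerivAt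
    have h3 := e1.unique e2
    calc (fderiv ℝ (φ t) m w).2
        = ((ContinuousLinearMap.snd ℝ (Fast r) (Slow k)).comp (fderiv ℝ (φ t) m)) w := rfl
      _ = (ContinuousLinearMap.snd ℝ (Fast r) (Slow k)) w := by rw [h3]
      _ = w.2 := rfl
  have hDH : ∀ t (w : SF r k), fderiv ℝ H (φ t m) (fderiv ℝ (φ t) m w) = fderiv ℝ H m w := by
    intro t w
    have h2 : fderiv ℝ (H ∘ φ t) m = (fderiv ℝ H (φ t m)).comp (fderiv ℝ (φ t) m) :=
      fderiv_comp m (hHd _) (hφd t m)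
    have h3 : H ∘ φ t = H := funext fun x => hHinv t x
    rw [h3] at h2
    exact (congrArg (fun L => L w) h2.symm)
  have hDJ : ∀ t (w : SF r k), fderiv ℝ J (φ t m) (fderiv ℝ (φ t) m w) = fderiv ℝ J m w := by
    intro t w
    have h2 : fderiv ℝ (J ∘ φ t) m = (fderiv ℝ J (φ t m)).comp (fderiv ℝ (φ t) m) :=
      fderiv_comp m (hJd _) (hφd t m)
    have h3 : J ∘ φ t = J := funext fun x => hJinv t x
    rw [h3] at h2
    exact (congrArg (fun L => L w) h2.symm)
  obtain ⟨u, hu⟩ := h0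
  have hωinv : ∀ t, ω (φ t m) = ω m := by
    intro t
    have hv2 : fderiv ℝ (φ t) m ((u, (0 : Slow k)))
        = ((fderiv ℝ (φ t) m ((u, (0 : Slow k)))).1, (0 : Slow k)) :=
      Prod.ext rfl (hDφ2 t (u, (0 : Slow k)))
    have e2 : fderiv ℝ J (φ t m) (fderiv ℝ (φ t) m ((u, (0 : Slow k))))
        = fderiv ℝ J m (u, 0) := hDJ t (u, 0)
    have e3 : fderiv ℝ H (φ t m) (fderiv ℝ (φ t) m ((u, (0 : Slow k))))
        = fderiv ℝ H m (u, 0) := hDH t (u, 0)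
    have e4 : fderiv ℝ J (φ t m) (fderiv ℝ (φ t) m ((u, (0 : Slow k))))
        = (1 / ω (φ t m)) * fderiv ℝ H (φ t m) (fderiv ℝ (φ t) m ((u, (0 : Slow k)))) := by
      conv_lhs => rw [hv2]
      conv_rhs => rw [hv2]
      exact hH2 (φ t m) _
    have e5 : (1 / ω m) * fderiv ℝ H m (u, 0) = (1 / ω (φ t m)) * fderiv ℝ H m (u, 0) := by
      rw [← hH2 m u, ← e2, e4, e3]
    have h6 : (1 / ω m) = (1 / ω (φ t m)) := mul_right_cancel₀ hu e5
    have hm := (hω_pos m).ne'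
    have hn' := (hω_pos (φ t m)).ne'
    field_simp at h6
    exact h6
  have hab0 : a + b * (1 / ω m) = 0 := by
    have h7 : (a + b * (1 / ω m)) * fderiv ℝ H m (u, (0 : Slow k)) = 0 := by
      have := hab (u, (0 : Slow k))
      rw [hH2 m u] at this
      linarith [this]
    exact (mul_eq_zero.mp h7).resolve_right hu
  obtain ⟨w, hw⟩ := h1
  have hpt : ∀ t, a * d1Form H (φ t m) (fderiv ℝ (φ t) m w)
      = -b * d1Form J (φ t m) (fderiv ℝ (φ t) m w) := by
    intro t
    have hsplit : fderiv ℝ (φ t) m w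
        = (((fderiv ℝ (φ t) m w).1, (0 : Slow k)) : SF r k)
          + (((0 : Fast r), (fderiv ℝ (φ t) m w).2) : SF r k) := by
      ext x <;> simp
    have hHsplit : fderiv ℝ H m w
        = fderiv ℝ H (φ t m) ((fderiv ℝ (φ t) m w).1, (0 : Slow k))
          + fderiv ℝ H (φ t m) ((0 : Fast r), (fderiv ℝ (φ t) m w).2) := by
      rw [← hDH t w]
      conv_lhs => rw [hsplit]
      rw [map_add]
    have hJsplit : fderiv ℝ J m w
        = fderiv ℝ J (φ t m) ((fderiv ℝ (φ t) m w).1, (0 : Slow k))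
          + fderiv ℝ J (φ t m) ((0 : Fast r), (fderiv ℝ (φ t) m w).2) := by
      rw [← hDJ t w]
      conv_lhs => rw [hsplit]
      rw [map_add]
    have hJfast : fderiv ℝ J (φ t m) ((fderiv ℝ (φ t) m w).1, (0 : Slow k))
        = (1 / ω m) * fderiv ℝ H (φ t m) ((fderiv ℝ (φ t) m w).1, (0 : Slow k)) := by
      rw [hH2, hωinv t]
    have hrel := hab w
    simp only [d1Form]
    linear_combination hrel - a * hHsplit - b * hJsplit - b * hJfast
      - (fderiv ℝ H (φ t m) ((fderiv ℝ (φ t) m w).1, (0 : Slow k))) * hab0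
  have key : a * avg1 φ (d1Form H) m w = -b * avg1 φ (d1Form J) m w := by
    unfold avg1
    rw [show a * (1 / (2 * π) * ∫ t in (0:ℝ)..(2 * π),
          d1Form H (φ t m) (fderiv ℝ (φ t) m w))
        = 1 / (2 * π) * ∫ t in (0:ℝ)..(2 * π),
          a * d1Form H (φ t m) (fderiv ℝ (φ t) m w) by
      rw [intervalIntegral.integral_const_mul]; ring]
    rw [show (-b) * (1 / (2 * π) * ∫ t in (0:ℝ)..(2 * π),
          d1Form J (φ t m) (fderiv ℝ (φ t) m w))
        = 1 / (2 * π) * ∫ t in (0:ℝ)..(2 * π),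
          (-b) * d1Form J (φ t m) (fderiv ℝ (φ t) m w) by
      rw [intervalIntegral.integral_const_mul]; ring]
    congr 1
    apply intervalIntegral.integral_congr
    intro t _
    exact hpt t
  rw [hH3 m w] at key
  have ha : a = 0 := by
    have : a * avg1 φ (d1Form H) m w = 0 := by rw [key]; ring
    exact (mul_eq_zero.mp this).resolve_right hw
  refine ⟨ha, ?_⟩
  rw [ha] at hab0
  have : (1 / ω m) ≠ 0 := (one_div_pos.mpr (hω_pos m)).ne'
  have hb := (mul_eq_zero.mp (by linarith : b * (1 / ω m) = 0)).resolve_right this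
  exact hb
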